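/- Let σ₁ = σ(v₁,v₂) and σ₂ = σ(w₁,w₂) be lattice cones with primitive generators in ℤ², with associated matrices A_{σ₁} (columns v₁,v₂) and A_{σ₂} (columns w₁,w₂). If there exists A ∈ GL₂(ℤ) with A·A_{σ₁} = A_{σ₂}, then Todd_{σ₁}(x₁,x₂) = Todd_{σ₂}(x₁,x₂) as formal power series in ℂ[[x₁,x₂]]. -/

import Mathlib

noncomputable section

/-- The twisted Todd series `Todd^λ(S) = S/(1 − λ·e^{−S}) ∈ ℂ[[S]]`.
For `λ = 1` it is the inverse of the power series `(1 − e^{−S})/S` (constant term 1);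
for `λ ≠ 1` the series `1 − λe^{−S}` is invertible (constant term `1 − λ`). -/
def ToddPS (l : ℂ) : PowerSeries ℂ :=
  if l = 1 then (PowerSeries.mk fun n => ((-1) ^ n / (n + 1).factorial : ℂ))⁻¹
  else PowerSeries.X * (1 - l • PowerSeries.mk fun n => ((-1) ^ n / n.factorial : ℂ))⁻¹

/-- `L^λ(S) := Todd^λ(S) − S/2`. -/
def LPS (l : ℂ) : PowerSeries ℂ := ToddPS l - PowerSeries.C (R := ℂ) (1 / 2) * PowerSeries.X

/-- Substitution of the linear form `c·x₁ + d·x₂` into a univariate power series: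
the coefficient of `x₁^{e₀}x₂^{e₁}` of `f(c·x₁ + d·x₂)` is
`coeff_{e₀+e₁}(f)·binom(e₀+e₁,e₀)·c^{e₀}d^{e₁}`. -/
def substLin (c d : ℂ) (f : PowerSeries ℂ) : MvPowerSeries (Fin 2) ℂ :=
  fun e => (PowerSeries.coeff (R := ℂ) (e 0 + e 1) f) * ((e 0 + e 1).choose (e 0) : ℂ) *
    c ^ (e 0) * d ^ (e 1)

/-- For a lift `m` of `g ∈ Γ_σ = ℤ²/(ℤw₁+ℤw₂)`, writing `m = a₁w₁ + a₂w₂` with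
`a₁, a₂ ∈ ℚ` (Cramer's rule), `χ_{σ,1}(g) = e^{2πi·a₁}`. -/
def char1 (w₁ w₂ m : ℤ × ℤ) : ℂ :=
  Complex.exp (2 * Real.pi * Complex.I *
    (((m.1 * w₂.2 - m.2 * w₂.1 : ℤ) : ℂ) / ((w₁.1 * w₂.2 - w₁.2 * w₂.1 : ℤ) : ℂ)))

/-- As `char1`, for the second coordinate: `χ_{σ,2}(g) = e^{2πi·a₂}`. -/
def char2 (w₁ w₂ m : ℤ × ℤ) : ℂ :=
  Complex.exp (2 * Real.pi * Complex.I *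
    (((w₁.1 * m.2 - w₁.2 * m.1 : ℤ) : ℂ) / ((w₁.1 * w₂.2 - w₁.2 * w₂.1 : ℤ) : ℂ)))

/-- The Todd series of the lattice cone `σ(w₁,w₂)`:
`Todd_σ(x₁,x₂) := Σ_{g∈Γ_σ} Todd^{χ_{σ,1}(g)}(x₁)·Todd^{χ_{σ,2}(g)}(x₂)`. -/
def ToddCone (w₁ w₂ : ℤ × ℤ) : MvPowerSeries (Fin 2) ℂ :=
  ∑ᶠ g : (ℤ × ℤ) ⧸ Submodule.span ℤ {w₁, w₂},
    substLin 1 0 (ToddPS (char1 w₁ w₂ g.out)) * substLin 0 1 (ToddPS (char2 w₁ w₂ g.out))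

/-- `L_σ(x₁,x₂) := Σ_{g∈Γ_σ} L^{χ_{σ,1}(g)}(x₁)·L^{χ_{σ,2}(g)}(x₂)`. -/
def LCone (w₁ w₂ : ℤ × ℤ) : MvPowerSeries (Fin 2) ℂ :=
  ∑ᶠ g : (ℤ × ℤ) ⧸ Submodule.span ℤ {w₁, w₂},
    substLin 1 0 (LPS (char1 w₁ w₂ g.out)) * substLin 0 1 (LPS (char2 w₁ w₂ g.out))

/-- A lattice vector is primitive if it is not an integer multiple `≥ 2`
of another lattice vector. -/
def IsPrimitiveVec (v : ℤ × ℤ) : Prop := ∀ (n : ℕ) (w : ℤ × ℤ), v = (n : ℤ) • w → n = 1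


/-- auxiliary: exp of 2πi times rationals equal mod ℤ. -/
lemma exp_ratio_eq (p p' D x : ℤ) (hD : (D : ℂ) ≠ 0) (h : p = p' + x * D) :
    Complex.exp (2 * Real.pi * Complex.I * ((p : ℂ) / (D : ℂ))) =
      Complex.exp (2 * Real.pi * Complex.I * ((p' : ℂ) / (D : ℂ))) := by
  have harg : 2 * (Real.pi : ℂ) * Complex.I * ((p : ℂ) / (D : ℂ)) =
      2 * (Real.pi : ℂ) * Complex.I * ((p' : ℂ) / (D : ℂ)) +
        (x : ℂ) * (2 * (Real.pi : ℂ) * Complex.I) := by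
    field_simp
    push_cast [h]
    ring
  rw [harg, Complex.exp_add, Complex.exp_int_mul_two_pi_mul_I, mul_one]

/-- auxiliary linear equivalence of ℤ² from a 2×2 integer matrix with det² = 1. -/
def matLinEquiv (a b c d : ℤ) (he : (a * d - b * c) * (a * d - b * c) = 1) :
    (ℤ × ℤ) ≃ₗ[ℤ] (ℤ × ℤ) where
  toFun m := (a * m.1 + b * m.2, c * m.1 + d * m.2)
  invFun m := ((a * d - b * c) * (d * m.1 - b * m.2), (a * d - b * c) * (a * m.2 - c * m.1))
  left_inv m := by
    refine Prod.ext ?_ ?_ <;> simp only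
    · linear_combination m.1 * he
    · linear_combination m.2 * he
  right_inv m := by
    refine Prod.ext ?_ ?_ <;> simp only
    · linear_combination m.1 * he
    · linear_combination m.2 * he
  map_add' x y := by refine Prod.ext ?_ ?_ <;> simp <;> ring
  map_smul' z x := by refine Prod.ext ?_ ?_ <;> simp <;> ring

lemma char1_coset (w₁ w₂ m m' : ℤ × ℤ) (hD : w₁.1 * w₂.2 - w₁.2 * w₂.1 ≠ 0)
    (h : m - m' ∈ Submodule.span ℤ ({w₁, w₂} : Set (ℤ × ℤ))) :
    char1 w₁ w₂ m = char1 w₁ w₂ m' := by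
  obtain ⟨x, y, hxy⟩ := Submodule.mem_span_pair.mp h
  have h1 : x * w₁.1 + y * w₂.1 = m.1 - m'.1 := congrArg Prod.fst hxy
  have h2 : x * w₁.2 + y * w₂.2 = m.2 - m'.2 := congrArg Prod.snd hxy
  have hDc : ((w₁.1 * w₂.2 - w₁.2 * w₂.1 : ℤ) : ℂ) ≠ 0 := Int.cast_ne_zero.mpr hD
  exact exp_ratio_eq _ _ _ x hDc (by linear_combination w₂.1 * h2 - w₂.2 * h1)

lemma char2_coset (w₁ w₂ m m' : ℤ × ℤ) (hD : w₁.1 * w₂.2 - w₁.2 * w₂.1 ≠ 0)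
    (h : m - m' ∈ Submodule.span ℤ ({w₁, w₂} : Set (ℤ × ℤ))) :
    char2 w₁ w₂ m = char2 w₁ w₂ m' := by
  obtain ⟨x, y, hxy⟩ := Submodule.mem_span_pair.mp h
  have h1 : x * w₁.1 + y * w₂.1 = m.1 - m'.1 := congrArg Prod.fst hxy
  have h2 : x * w₁.2 + y * w₂.2 = m.2 - m'.2 := congrArg Prod.snd hxy
  have hDc : ((w₁.1 * w₂.2 - w₁.2 * w₂.1 : ℤ) : ℂ) ≠ 0 := Int.cast_ne_zero.mpr hD
  exact exp_ratio_eq _ _ _ y hDc (by linear_combination w₁.2 * h1 - w₁.1 * h2)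

lemma char1_transform (a b c d : ℤ) (he : a * d - b * c ≠ 0) (v₁ v₂ w₁ w₂ m : ℤ × ℤ)
    (hw₁ : w₁ = (a * v₁.1 + b * v₁.2, c * v₁.1 + d * v₁.2))
    (hw₂ : w₂ = (a * v₂.1 + b * v₂.2, c * v₂.1 + d * v₂.2)) :
    char1 v₁ v₂ m = char1 w₁ w₂ (a * m.1 + b * m.2, c * m.1 + d * m.2) := by
  subst hw₁ hw₂
  unfold char1
  congr 1
  have hN : ((a * m.1 + b * m.2) * (c * v₂.1 + d * v₂.2) -
      (c * m.1 + d * m.2) * (a * v₂.1 + b * v₂.2) : ℤ) =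
      (a * d - b * c) * (m.1 * v₂.2 - m.2 * v₂.1) := by ring
  have hD : ((a * v₁.1 + b * v₁.2) * (c * v₂.1 + d * v₂.2) -
      (c * v₁.1 + d * v₁.2) * (a * v₂.1 + b * v₂.2) : ℤ) =
      (a * d - b * c) * (v₁.1 * v₂.2 - v₁.2 * v₂.1) := by ring
  simp only [hN, hD]
  push_cast
  rw [mul_div_mul_left _ _ (by exact_mod_cast he)]

lemma char2_transform (a b c d : ℤ) (he : a * d - b * c ≠ 0) (v₁ v₂ w₁ w₂ m : ℤ × ℤ)
    (hw₁ : w₁ = (a * v₁.1 + b * v₁.2, c * v₁.1 + d * v₁.2))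
    (hw₂ : w₂ = (a * v₂.1 + b * v₂.2, c * v₂.1 + d * v₂.2)) :
    char2 v₁ v₂ m = char2 w₁ w₂ (a * m.1 + b * m.2, c * m.1 + d * m.2) := by
  subst hw₁ hw₂
  unfold char2
  congr 1
  have hN : ((a * v₁.1 + b * v₁.2) * (c * m.1 + d * m.2) -
      (c * v₁.1 + d * v₁.2) * (a * m.1 + b * m.2) : ℤ) =
      (a * d - b * c) * (v₁.1 * m.2 - v₁.2 * m.1) := by ring
  have hD : ((a * v₁.1 + b * v₁.2) * (c * v₂.1 + d * v₂.2) -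
      (c * v₁.1 + d * v₁.2) * (a * v₂.1 + b * v₂.2) : ℤ) =
      (a * d - b * c) * (v₁.1 * v₂.2 - v₁.2 * v₂.1) := by ring
  simp only [hN, hD]
  push_cast
  rw [mul_div_mul_left _ _ (by exact_mod_cast he)]

/- STATEMENT 4: similar cones have equal Todd series. -/
theorem stmt_4 (v₁ v₂ w₁ w₂ : ℤ × ℤ)
    (hprimv₁ : IsPrimitiveVec v₁) (hprimv₂ : IsPrimitiveVec v₂)
    (hprimw₁ : IsPrimitiveVec w₁) (hprimw₂ : IsPrimitiveVec w₂)
    (hindepv : v₁.1 * v₂.2 - v₁.2 * v₂.1 ≠ 0) (hindepw : w₁.1 * w₂.2 - w₁.2 * w₂.1 ≠ 0)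
    (A : Matrix (Fin 2) (Fin 2) ℤ) (hA : IsUnit A.det)
    (hAA : A * !![v₁.1, v₂.1; v₁.2, v₂.2] = !![w₁.1, w₂.1; w₁.2, w₂.2]) :
    ToddCone v₁ v₂ = ToddCone w₁ w₂ := by
  -- entries of A
  set a := A 0 0 with ha
  set b := A 0 1 with hb
  set c := A 1 0 with hc
  set d := A 1 1 with hd
  have hE := Matrix.ext_iff.mpr hAA
  have h00 := hE 0 0
  have h01 := hE 0 1
  have h10 := hE 1 0
  have h11 := hE 1 1
  simp [Matrix.mul_apply, Fin.sum_univ_two, ← ha, ← hb, ← hc, ← hd] at h00 h01 h10 h11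
  have hw₁ : w₁ = (a * v₁.1 + b * v₁.2, c * v₁.1 + d * v₁.2) := by
    refine Prod.ext ?_ ?_ <;> simp [h00.symm, h10.symm]
  have hw₂ : w₂ = (a * v₂.1 + b * v₂.2, c * v₂.1 + d * v₂.2) := by
    refine Prod.ext ?_ ?_ <;> simp [h01.symm, h11.symm]
  -- the determinant
  have hdet : A.det = a * d - b * c := by rw [Matrix.det_fin_two]
  have hunit : a * d - b * c = 1 ∨ a * d - b * c = -1 := by
    rw [← hdet]; exact Int.isUnit_iff.mp hA
  have he2 : (a * d - b * c) * (a * d - b * c) = 1 := by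
    rcases hunit with h | h <;> rw [h] <;> ring
  have hene : a * d - b * c ≠ 0 := by
    rcases hunit with h | h <;> rw [h] <;> decide
  -- the linear equivalence
  set f := matLinEquiv a b c d he2 with hf
  have hfv₁ : f v₁ = w₁ := by rw [hw₁]; rfl
  have hfv₂ : f v₂ = w₂ := by rw [hw₂]; rfl
  have hmap : (Submodule.span ℤ ({v₁, v₂} : Set (ℤ × ℤ))).map (f : (ℤ × ℤ) →ₗ[ℤ] (ℤ × ℤ))
      = Submodule.span ℤ ({w₁, w₂} : Set (ℤ × ℤ)) := by
    rw [Submodule.map_span]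
    congr 1
    rw [Set.image_insert_eq, Set.image_singleton]
    simp [hfv₁, hfv₂]
  set ψ := Submodule.Quotient.equiv (Submodule.span ℤ ({v₁, v₂} : Set (ℤ × ℤ)))
    (Submodule.span ℤ ({w₁, w₂} : Set (ℤ × ℤ))) f hmap with hψ
  unfold ToddCone
  refine finsum_eq_of_bijective ψ ψ.bijective ?_
  intro g
  have hout : Submodule.Quotient.mk (p := Submodule.span ℤ ({w₁, w₂} : Set (ℤ × ℤ)))
      (f g.out) = Submodule.Quotient.mk ((ψ g).out) := by
    have h1 : Submodule.Quotient.mk (p := Submodule.span ℤ ({w₁, w₂} : Set (ℤ × ℤ)))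
        ((ψ g).out) = ψ g := Quotient.out_eq _
    have h2 : Submodule.Quotient.mk (p := Submodule.span ℤ ({v₁, v₂} : Set (ℤ × ℤ)))
        g.out = g := Quotient.out_eq _
    rw [h1]
    conv_rhs => rw [← h2, hψ, Submodule.Quotient.equiv_apply, Submodule.mapQ_apply]
    rfl
  have hmem : f g.out - (ψ g).out ∈ Submodule.span ℤ ({w₁, w₂} : Set (ℤ × ℤ)) :=
    (Submodule.Quotient.eq _).mp hout
  have hc1 : char1 v₁ v₂ g.out = char1 w₁ w₂ (ψ g).out := by
    rw [char1_transform a b c d hene v₁ v₂ w₁ w₂ g.out hw₁ hw₂]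
    exact char1_coset w₁ w₂ (f g.out) ((ψ g).out) hindepw hmem
  have hc2 : char2 v₁ v₂ g.out = char2 w₁ w₂ (ψ g).out := by
    rw [char2_transform a b c d hene v₁ v₂ w₁ w₂ g.out hw₁ hw₂]
    exact char2_coset w₁ w₂ (f g.out) ((ψ g).out) hindepw hmem
  rw [hc1, hc2]


end
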